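/- There is no sequence (x_i)_{i≥1} of real numbers with x_i ∈ (0,1) for all i, x_{i+1} < x_i for all i, lim_{i→∞} x_i = 0, and ∑_{i=1}^∞ (x_i − x_{i+1}) · x_i^{−i} ≤ 1. -/
import Mathlib


open Set Filter Topology

/-- There is no strictly decreasing sequence `(x_i)_{i≥1}` in `(0,1)`
tending to `0` with `∑_{i=1}^∞ (x_i − x_{i+1}) · x_i^{−i} ≤ 1` (formulated via the partial
sums of this series of nonnegative terms). -/
theorem no_decreasing_sequence_with_bounded_weighted_sum :
    ¬ ∃ x : ℕ → ℝ,
      (∀ i, 1 ≤ i → x i ∈ Ioo (0:ℝ) 1) ∧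
      (∀ i, 1 ≤ i → x (i + 1) < x i) ∧
      Tendsto x atTop (𝓝 (0:ℝ)) ∧
      (∀ N : ℕ, ∑ i ∈ Finset.range N, (x (i + 1) - x (i + 2)) / (x (i + 1)) ^ (i + 1) ≤ 1) := by
  rintro ⟨x, hmem, hdec, hlim, hsum⟩
  -- antitone from index 1
  have hmono : ∀ i j, 1 ≤ i → i ≤ j → x j ≤ x i := by
    intro i j hi hij
    induction j, hij using Nat.le_induction with
    | base => exact le_rfl
    | succ n hn ih => exact le_trans (hdec n (le_trans hi hn)).le ih
  have hx2 := hmem 2 (by norm_num)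
  have hx2pos : (0:ℝ) < x 2 := hx2.1
  have hx2lt1 : x 2 < 1 := hx2.2
  have hpos : ∀ i, 1 ≤ i → 0 < x i := fun i hi => (hmem i hi).1
  -- key estimate
  have key : ∀ N, 1 ≤ N →
      (x 2 - x (N + 1)) / (x 2) ^ 2 ≤
        ∑ i ∈ Finset.range N, (x (i + 1) - x (i + 2)) / (x (i + 1)) ^ (i + 1) := by
    intro N hN
    induction N, hN using Nat.le_induction with
    | base =>
      simp only [Finset.sum_range_one]
      have h1 : (0:ℝ) ≤ (x 1 - x 2) / (x 1) ^ 1 := by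
        apply div_nonneg
        · linarith [hdec 1 le_rfl]
        · exact pow_nonneg (hpos 1 le_rfl).le 1
      simpa using h1
    | succ n hn ih =>
      rw [Finset.sum_range_succ]
      have hxn1 : 0 < x (n + 1) := hpos _ (by omega)
      have hxn2 : 0 < x (n + 2) := hpos _ (by omega)
      have hle : x (n + 1) ≤ x 2 := hmono 2 (n + 1) (by norm_num) (by omega)
      have hlt1 : x (n + 1) < 1 := (hmem (n + 1) (by omega)).2
      have hpow : (x (n + 1)) ^ (n + 1) ≤ (x 2) ^ 2 := by
        calc (x (n + 1)) ^ (n + 1) ≤ (x (n + 1)) ^ 2 :=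
              pow_le_pow_of_le_one hxn1.le hlt1.le (by omega)
          _ ≤ (x 2) ^ 2 := pow_le_pow_left₀ hxn1.le hle 2
      have hnum : 0 ≤ x (n + 1) - x (n + 2) := by
        linarith [hdec (n + 1) (by omega)]
      have hterm : (x (n + 1) - x (n + 2)) / (x 2) ^ 2 ≤
          (x (n + 1) - x (n + 2)) / (x (n + 1)) ^ (n + 1) :=
        div_le_div_of_nonneg_left hnum (by positivity) hpow
      have : (x 2 - x (n + 1 + 1)) / (x 2) ^ 2
          = (x 2 - x (n + 1)) / (x 2) ^ 2 + (x (n + 1) - x (n + 2)) / (x 2) ^ 2 := by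
        ring_nf
      rw [this]
      exact add_le_add ih hterm
  -- choose N large
  have hgap : (0:ℝ) < x 2 - (x 2) ^ 2 := by nlinarith
  have hev : ∀ᶠ n in atTop, x n < x 2 - (x 2) ^ 2 :=
    hlim.eventually (eventually_lt_nhds hgap)
  obtain ⟨M, hM⟩ := hev.exists_forall_of_atTop
  obtain ⟨M, hM⟩ := eventually_atTop.mp hev
  set N := M + 1 with hNdef
  have hN1 : 1 ≤ N := by omega
  have hxN : x (N + 1) < x 2 - (x 2) ^ 2 := hM (N + 1) (by omega)
  have h1 : (1:ℝ) < (x 2 - x (N + 1)) / (x 2) ^ 2 := by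
    rw [lt_div_iff₀ (by positivity)]
    linarith
  have := le_trans (key N hN1) (hsum N)
  linarith
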